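/- For integers ℓ, m with m ≥ 0 and 2m - ℓ < -1, and a complex number z with nonzero imaginary part, the integral ∫_{-∞}^{∞} (x+z)^{m-ℓ} (x+z̄)^{m} dx equals 0. -/

import Mathlib

open MeasureTheory Filter Complex

lemma aux_ne (z : ℂ) (hz : z.im ≠ 0) (x : ℝ) : (x : ℂ) + z ≠ 0 := by
  intro h
  apply hz
  have := congrArg Complex.im h
  simpa using this

lemma aux_integrable (n : ℤ) (hn : n ≤ -2) (z : ℂ) (hz : z.im ≠ 0) :
    Integrable fun x : ℝ => ((x : ℂ) + z) ^ n := by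
  have himpos : (0 : ℝ) < |z.im| := abs_pos.mpr hz
  have hcont : Continuous fun x : ℝ => ((x : ℂ) + z) ^ n :=
    (Complex.continuous_ofReal.add continuous_const).zpow₀ n fun x => Or.inl (aux_ne z hz x)
  set C : ℝ := max 1 (|z.im| ^ (n + 2)) with hC
  have hintg : Integrable fun x : ℝ => C * (z.im ^ 2)⁻¹ * (((x + z.re) * |z.im|⁻¹) ^ 2 + 1)⁻¹ := by
    have h1 : Integrable fun x : ℝ => (1 + x ^ 2)⁻¹ := integrable_inv_one_add_sq
    have h2 := (h1.comp_mul_right' (inv_ne_zero (abs_ne_zero.mpr hz))).comp_add_right z.re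
    refine (h2.const_mul (C * (z.im ^ 2)⁻¹)).congr ?_
    filter_upwards with x
    simp [add_comm (1 : ℝ)]
  refine hintg.mono' (hcont.aestronglyMeasurable) ?_
  filter_upwards with x
  have habs : (0 : ℝ) < ‖(x : ℂ) + z‖ := norm_pos_iff.mpr (aux_ne z hz x)
  have him : |z.im| ≤ ‖(x : ℂ) + z‖ := by
    simpa using Complex.abs_im_le_norm ((x : ℂ) + z)
  have hCbound : ‖(x : ℂ) + z‖ ^ (n + 2) ≤ C := by
    rcases le_or_gt 1 (‖(x : ℂ) + z‖) with h | h
    · calc ‖(x : ℂ) + z‖ ^ (n + 2) ≤ 1 := zpow_le_one_of_nonpos₀ h (by omega)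
        _ ≤ C := le_max_left _ _
    · obtain ⟨j, hj⟩ : ∃ j : ℕ, n + 2 = -(j : ℤ) := ⟨(-(n + 2)).toNat, by omega⟩
      calc ‖(x : ℂ) + z‖ ^ (n + 2) ≤ |z.im| ^ (n + 2) := by
            rw [hj, zpow_neg, zpow_neg, zpow_natCast, zpow_natCast]
            gcongr
        _ ≤ C := le_max_right _ _
  have hsq : ‖(x : ℂ) + z‖ ^ (2 : ℤ)
      = z.im ^ 2 * (((x + z.re) * |z.im|⁻¹) ^ 2 + 1) := by
    rw [zpow_two, ← sq, ← Complex.normSq_eq_norm_sq]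
    simp only [Complex.normSq_apply, Complex.add_re, Complex.ofReal_re, Complex.add_im,
      Complex.ofReal_im, zero_add]
    field_simp [sq_abs]
    rw [sq_abs]; ring
  calc ‖((x : ℂ) + z) ^ n‖ = ‖(x : ℂ) + z‖ ^ n := by
        rw [norm_zpow]
    _ = ‖(x : ℂ) + z‖ ^ (n + 2) * (‖(x : ℂ) + z‖ ^ (2 : ℤ))⁻¹ := by
        rw [← zpow_neg, ← zpow_add₀ habs.ne']; ring_nf
    _ ≤ C * (‖(x : ℂ) + z‖ ^ (2 : ℤ))⁻¹ := by gcongr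
    _ = C * (z.im ^ 2)⁻¹ * (((x + z.re) * |z.im|⁻¹) ^ 2 + 1)⁻¹ := by
        rw [hsq, mul_inv, mul_assoc]

lemma aux_tendsto_abs_atTop (z : ℂ) (l : Filter ℝ)
    (hl : Tendsto (fun x : ℝ => |x + z.re|) l atTop) :
    Tendsto (fun x : ℝ => ‖(x : ℂ) + z‖) l atTop := by
  apply tendsto_atTop_mono (fun x => ?_) hl
  simpa using Complex.abs_re_le_norm ((x : ℂ) + z)

lemma aux_integral_zero (n : ℤ) (hn : n ≤ -2) (z : ℂ) (hz : z.im ≠ 0) :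
    (∫ x : ℝ, ((x : ℂ) + z) ^ n) = 0 := by
  have hne : ((n : ℂ) + 1) ≠ 0 := by
    intro h
    have : ((n + 1 : ℤ) : ℂ) = 0 := by push_cast; exact h
    have := Int.cast_injective (α := ℂ) (this.trans (Int.cast_zero).symm)
    omega
  set F : ℝ → ℂ := fun x => ((x : ℂ) + z) ^ (n + 1) / ((n : ℂ) + 1) with hF
  have hderiv : ∀ x : ℝ, HasDerivAt F (((x : ℂ) + z) ^ n) x := by
    intro x
    have h2 := hasDerivAt_zpow (n + 1) ((x : ℂ) + z) (Or.inl (aux_ne z hz x))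
    have h3 : HasDerivAt (fun w : ℂ => w + z) 1 ((x : ℝ) : ℂ) := (hasDerivAt_id _).add_const z
    have h4 := (HasDerivAt.comp ((x : ℝ) : ℂ) h2 h3).div_const ((n : ℂ) + 1)
    have h5 : HasDerivAt (fun w : ℂ => (w + z) ^ (n + 1) / ((n : ℂ) + 1))
        (((x : ℂ) + z) ^ n) ((x : ℝ) : ℂ) := by
      refine h4.congr_deriv ?_
      rw [show n + 1 - 1 = n by ring]
      push_cast
      field_simp
    exact h5.comp_ofReal
  have hint := aux_integrable n hn z hz
  have htends : ∀ l : Filter ℝ, Tendsto (fun x : ℝ => |x + z.re|) l atTop →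
      Tendsto F l (nhds 0) := by
    intro l hl
    have h5 : Tendsto (fun x : ℝ => ‖(x : ℂ) + z‖ ^ (n + 1)) l (nhds 0) :=
      (tendsto_zpow_atTop_zero (by omega : n + 1 < 0)).comp (aux_tendsto_abs_atTop z l hl)
    rw [tendsto_zero_iff_norm_tendsto_zero]
    have : (fun x : ℝ => ‖F x‖)
        = fun x : ℝ => ‖(x : ℂ) + z‖ ^ (n + 1) * ‖(n : ℂ) + 1‖⁻¹ := by
      ext x
      simp [hF, norm_div, norm_zpow, div_eq_mul_inv]
    rw [this]
    simpa using h5.mul_const ‖(n : ℂ) + 1‖⁻¹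
  have hbot : Tendsto F atBot (nhds 0) := by
    refine htends _ ?_
    exact tendsto_abs_atBot_atTop.comp (tendsto_atBot_add_const_right _ _ tendsto_id)
  have htop : Tendsto F atTop (nhds 0) := by
    refine htends _ ?_
    exact tendsto_abs_atTop_atTop.comp (tendsto_atTop_add_const_right _ _ tendsto_id)
  have := integral_of_hasDerivAt_of_tendsto hderiv hint hbot htop
  simpa using this

open Finset in
/-- For integers `ℓ, m` with `m ≥ 0` and `2m - ℓ < -1`, and a complex number `z` with
nonzero imaginary part, `∫_{-∞}^{∞} (x+z)^{m-ℓ} (x+z̄)^{m} dx = 0`. -/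
theorem integral_vanishes (ℓ m : ℤ) (hm : 0 ≤ m) (hconv : 2 * m - ℓ < -1)
    (z : ℂ) (hz : z.im ≠ 0) :
    (∫ x : ℝ, ((x : ℂ) + z) ^ (m - ℓ) * ((x : ℂ) + (starRingEnd ℂ) z) ^ m) = 0 := by
  lift m to ℕ using hm with k hk
  have hexp : ∀ j : ℕ, j ≤ k → ((k : ℤ) - ℓ + j) ≤ -2 := by
    intro j hj
    omega
  have key : ∀ x : ℝ, ((x : ℂ) + z) ^ ((k : ℤ) - ℓ) * ((x : ℂ) + (starRingEnd ℂ) z) ^ (k : ℤ)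
      = ∑ j ∈ range (k + 1),
        ((starRingEnd ℂ) z - z) ^ (k - j) * (k.choose j : ℂ) * ((x : ℂ) + z) ^ ((k : ℤ) - ℓ + j) := by
    intro x
    have hb : ((x : ℂ) + (starRingEnd ℂ) z) = ((x : ℂ) + z) + ((starRingEnd ℂ) z - z) := by ring
    rw [zpow_natCast, hb, add_pow]
    rw [Finset.mul_sum]
    refine Finset.sum_congr rfl fun j hj => ?_
    rw [zpow_add₀ (aux_ne z hz x) _ (j : ℤ), zpow_natCast]
    ring
  simp_rw [key]
  rw [integral_finset_sum]
  · refine Finset.sum_eq_zero fun j hj => ?_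
    rw [integral_const_mul, aux_integral_zero _ (hexp j (by simpa [Nat.lt_succ_iff] using hj)) z hz,
      mul_zero]
  · intro j hj
    exact (aux_integrable _ (hexp j (by simpa [Nat.lt_succ_iff] using hj)) z hz).const_mul _
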